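/- Let U, V be independent uniform random variables on [0,1] and Z = (1-U)V + U(1-V). Then Z has density f_Z(z) = -log|1 - 2z| with respect to Lebesgue measure on [0,1]. -/

import Mathlib

open MeasureTheory


lemma mem_uIcc_abs (u z : ℝ) : z ∈ Set.uIcc u (1-u) ↔ |1-2*z| ≤ |1-2*u| := by
  rw [Set.mem_uIcc, abs_le]
  rcases abs_cases (1-2*u) with ⟨h1,h2⟩|⟨h1,h2⟩ <;>
    constructor <;> intro h <;>
    first
      | (rcases h with ⟨h3,h4⟩|⟨h3,h4⟩ <;> constructor <;> linarith)
      | (rcases h with ⟨h3,h4⟩; first | (left; constructor <;> linarith) | (right; constructor <;> linarith))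

lemma affine_preimage_volume (a u : ℝ) (ha : a ≠ 0) (B : Set ℝ) :
    volume ((fun v => a*v + u) ⁻¹' B) = (ENNReal.ofReal |a|)⁻¹ * volume B := by
  have : (fun v => a*v + u) ⁻¹' B = (fun v => a*v) ⁻¹' ((fun x => x + u) ⁻¹' B) := rfl
  rw [this, Real.volume_preimage_mul_left ha, measure_preimage_add_right volume u B,
    abs_inv, ENNReal.ofReal_inv_of_pos (abs_pos.mpr ha)]

lemma slice_eq (A : Set ℝ) (hA : MeasurableSet A) (u : ℝ) (hu : (1:ℝ)-2*u ≠ 0) :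
    volume ((fun v => (1-u)*v + u*(1-v)) ⁻¹' A ∩ Set.Icc 0 1)
      = ∫⁻ z in A, (if |1-2*z| ≤ |1-2*u| then (ENNReal.ofReal |1-2*u|)⁻¹ else 0) := by
  have hpre : ((fun v => (1-u)*v + u*(1-v)) ⁻¹' A ∩ Set.Icc 0 1)
      = (fun v => (1-2*u)*v + u) ⁻¹' (A ∩ Set.uIcc u (1-u)) := by
    have hfe : (fun v : ℝ => (1-u)*v + u*(1-v)) = fun v => (1-2*u)*v + u := by
      funext v; ring
    rw [hfe]
    ext v
    simp only [Set.mem_inter_iff, Set.mem_preimage, Set.mem_Icc, Set.mem_uIcc]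
    rcases lt_or_gt_of_ne hu with h|h
    · constructor
      · rintro ⟨hv, h0, h1⟩
        exact ⟨hv, Or.inr ⟨by nlinarith, by nlinarith⟩⟩
      · rintro ⟨hv, ⟨h1,h2⟩|⟨h1,h2⟩⟩ <;> exact ⟨hv, by nlinarith, by nlinarith⟩
    · constructor
      · rintro ⟨hv, h0, h1⟩
        exact ⟨hv, Or.inl ⟨by nlinarith, by nlinarith⟩⟩
      · rintro ⟨hv, ⟨h1,h2⟩|⟨h1,h2⟩⟩ <;> exact ⟨hv, by nlinarith, by nlinarith⟩
  rw [hpre, affine_preimage_volume _ _ hu]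
  have hSet : {z : ℝ | |1-2*z| ≤ |1-2*u|} = Set.uIcc u (1-u) := by
    ext z; rw [Set.mem_setOf_eq, mem_uIcc_abs]
  have hSmeas : MeasurableSet {z : ℝ | |1-2*z| ≤ |1-2*u|} := by
    rw [hSet]; exact measurableSet_uIcc
  have hind : (fun z => (if |1-2*z| ≤ |1-2*u| then (ENNReal.ofReal |1-2*u|)⁻¹ else 0))
      = Set.indicator {z : ℝ | |1-2*z| ≤ |1-2*u|} (fun _ => (ENNReal.ofReal |1-2*u|)⁻¹) := by
    funext z; rw [Set.indicator_apply]; rfl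
  rw [hind, lintegral_indicator hSmeas, setLIntegral_const,
    Measure.restrict_apply hSmeas, hSet, Set.inter_comm]


lemma hderiv1 (x : ℝ) (hx : (1:ℝ)-2*x ≠ 0) :
    HasDerivAt (fun u => -(1/2) * Real.log (1-2*u)) ((1-2*x)⁻¹) x := by
  have h1 : HasDerivAt (fun u : ℝ => 1-2*u) (-2) x := by
    exact (((hasDerivAt_id x).const_mul (2:ℝ)).const_sub 1).congr_deriv (by ring)
  have h3 := ((Real.hasDerivAt_log hx).comp x h1).const_mul (-(1/2) : ℝ)
  exact h3.congr_deriv (by ring)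

lemma hderiv2 (x : ℝ) (hx : (2:ℝ)*x-1 ≠ 0) :
    HasDerivAt (fun u => (1/2) * Real.log (2*u-1)) ((2*x-1)⁻¹) x := by
  have h1 : HasDerivAt (fun u : ℝ => 2*u-1) (2) x := by
    simpa using ((hasDerivAt_id x).const_mul (2)).sub_const 1
  have h3 := ((Real.hasDerivAt_log hx).comp x h1).const_mul ((1/2) : ℝ)
  exact h3.congr_deriv (by ring)

lemma int1 (t : ℝ) (ht : 0 < t) (ht1 : t < 1) :
    ∫ u in (0:ℝ)..((1-t)/2), (1-2*u)⁻¹ = -(1/2) * Real.log t := by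
  have ha : (0:ℝ) ≤ (1-t)/2 := by linarith
  have key : ∀ x ∈ Set.uIcc (0:ℝ) ((1-t)/2), HasDerivAt (fun u => -(1/2) * Real.log (1-2*u)) ((1-2*x)⁻¹) x := by
    intro x hx
    rw [Set.uIcc_of_le ha, Set.mem_Icc] at hx
    exact hderiv1 x (by linarith [hx.2])
  have hcont : ContinuousOn (fun u : ℝ => (1-2*u)⁻¹) (Set.uIcc (0:ℝ) ((1-t)/2)) := by
    apply ContinuousOn.inv₀ (by fun_prop)
    intro x hx
    rw [Set.uIcc_of_le ha, Set.mem_Icc] at hx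
    linarith [hx.2]
  rw [intervalIntegral.integral_eq_sub_of_hasDerivAt key (hcont.intervalIntegrable)]
  have : (1:ℝ) - 2*((1-t)/2) = t := by ring
  rw [this]; simp

lemma int2 (t : ℝ) (ht : 0 < t) (ht1 : t < 1) :
    ∫ u in ((1+t)/2)..(1:ℝ), (2*u-1)⁻¹ = -(1/2) * Real.log t := by
  have ha : ((1+t)/2 : ℝ) ≤ 1 := by linarith
  have key : ∀ x ∈ Set.uIcc ((1+t)/2) (1:ℝ), HasDerivAt (fun u => (1/2) * Real.log (2*u-1)) ((2*x-1)⁻¹) x := by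
    intro x hx
    rw [Set.uIcc_of_le ha, Set.mem_Icc] at hx
    exact hderiv2 x (by linarith [hx.1])
  have hcont : ContinuousOn (fun u : ℝ => (2*u-1)⁻¹) (Set.uIcc ((1+t)/2) (1:ℝ)) := by
    apply ContinuousOn.inv₀ (by fun_prop)
    intro x hx
    rw [Set.uIcc_of_le ha, Set.mem_Icc] at hx
    linarith [hx.1]
  rw [intervalIntegral.integral_eq_sub_of_hasDerivAt key (hcont.intervalIntegrable)]
  have : (2:ℝ)*((1+t)/2) - 1 = t := by ring
  rw [this]; norm_num

lemma inner_lintegral (z : ℝ) (hz0 : 0 < z) (hz1 : z < 1) (hz : z ≠ 1/2) :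
    ∫⁻ u in Set.Icc (0:ℝ) 1, (if |1-2*z| ≤ |1-2*u| then (ENNReal.ofReal |1-2*u|)⁻¹ else 0)
      = ENNReal.ofReal (-Real.log |1-2*z|) := by
  set t := |1-2*z| with htdef
  have ht : 0 < t := abs_pos.mpr (by intro h; apply hz; linarith)
  have ht1 : t < 1 := abs_lt.mpr ⟨by linarith, by linarith⟩
  set a := (1-t)/2 with hadef
  set b := (1+t)/2 with hbdef
  have hab : a < b := by simp only [hadef, hbdef]; linarith
  have ha0 : (0:ℝ) ≤ a := by simp only [hadef]; linarith
  have hb1 : b ≤ 1 := by simp only [hbdef]; linarith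
  have hsplit : Set.Icc (0:ℝ) 1 = Set.Icc 0 a ∪ (Set.Ioo a b ∪ Set.Icc b 1) := by
    ext x
    simp only [Set.mem_Icc, Set.mem_union, Set.mem_Ioo]
    constructor
    · rintro ⟨h0, h1⟩
      rcases le_or_gt x a with h|h
      · exact Or.inl ⟨h0, h⟩
      rcases lt_or_ge x b with h'|h'
      · exact Or.inr (Or.inl ⟨h, h'⟩)
      · exact Or.inr (Or.inr ⟨h', h1⟩)
    · rintro (⟨h0,h1⟩|⟨h0,h1⟩|⟨h0,h1⟩) <;> constructor <;> linarith
  have P2 : ∫⁻ u in Set.Ioo a b, (if t ≤ |1-2*u| then (ENNReal.ofReal |1-2*u|)⁻¹ else 0) = 0 := by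
    rw [setLIntegral_congr_fun measurableSet_Ioo
      (fun u hu => ?_) (g := fun _ => 0), lintegral_zero]
    rcases hu with ⟨h0, h1⟩
    have : |1-2*u| < t := abs_lt.mpr ⟨by simp only [hadef, hbdef] at *; linarith,
      by simp only [hadef, hbdef] at *; linarith⟩
    simp [not_le.mpr this]
  have P1 : ∫⁻ u in Set.Icc (0:ℝ) a, (if t ≤ |1-2*u| then (ENNReal.ofReal |1-2*u|)⁻¹ else 0)
      = ENNReal.ofReal (-(1/2) * Real.log t) := by
    have hcg : ∀ u ∈ Set.Icc (0:ℝ) a,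
        (if t ≤ |1-2*u| then (ENNReal.ofReal |1-2*u|)⁻¹ else 0) = ENNReal.ofReal ((1-2*u)⁻¹) := by
      rintro u ⟨h0, h1⟩
      have h2 : t ≤ 1 - 2*u := by simp only [hadef] at h1; linarith
      have h3 : (0:ℝ) < 1 - 2*u := lt_of_lt_of_le ht h2
      rw [abs_of_pos h3, if_pos h2, ENNReal.ofReal_inv_of_pos h3]
    rw [setLIntegral_congr_fun measurableSet_Icc hcg]
    have hint : IntegrableOn (fun u : ℝ => (1-2*u)⁻¹) (Set.Icc 0 a) := by
      apply ContinuousOn.integrableOn_Icc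
      apply ContinuousOn.inv₀ (by fun_prop)
      rintro x ⟨h0, h1⟩
      simp only [hadef] at h1; intro hc; nlinarith
    have hnn : (0 : ℝ → ℝ) ≤ᵐ[volume.restrict (Set.Icc (0:ℝ) a)] fun u => (1-2*u)⁻¹ := by
      rw [Filter.EventuallyLE, ae_restrict_iff' measurableSet_Icc]
      apply Filter.Eventually.of_forall
      rintro x ⟨h0, h1⟩
      simp only [Pi.zero_apply]
      apply inv_nonneg.mpr
      simp only [hadef] at h1; linarith
    rw [← ofReal_integral_eq_lintegral_ofReal hint hnn]
    congr 1
    rw [integral_Icc_eq_integral_Ioc, ← intervalIntegral.integral_of_le ha0]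
    exact int1 t ht ht1
  have P3 : ∫⁻ u in Set.Icc b (1:ℝ), (if t ≤ |1-2*u| then (ENNReal.ofReal |1-2*u|)⁻¹ else 0)
      = ENNReal.ofReal (-(1/2) * Real.log t) := by
    have hcg : ∀ u ∈ Set.Icc b (1:ℝ),
        (if t ≤ |1-2*u| then (ENNReal.ofReal |1-2*u|)⁻¹ else 0) = ENNReal.ofReal ((2*u-1)⁻¹) := by
      rintro u ⟨h0, h1⟩
      have h2 : t ≤ 2*u - 1 := by simp only [hbdef] at h0; linarith
      have h3 : (0:ℝ) < 2*u - 1 := lt_of_lt_of_le ht h2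
      have habs : |1-2*u| = 2*u-1 := by rw [abs_of_nonpos (by linarith)]; ring
      rw [habs, if_pos h2, ENNReal.ofReal_inv_of_pos h3]
    rw [setLIntegral_congr_fun measurableSet_Icc hcg]
    have hint : IntegrableOn (fun u : ℝ => (2*u-1)⁻¹) (Set.Icc b 1) := by
      apply ContinuousOn.integrableOn_Icc
      apply ContinuousOn.inv₀ (by fun_prop)
      rintro x ⟨h0, h1⟩
      simp only [hbdef] at h0; intro hc; nlinarith
    have hnn : (0 : ℝ → ℝ) ≤ᵐ[volume.restrict (Set.Icc b (1:ℝ))] fun u => (2*u-1)⁻¹ := by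
      rw [Filter.EventuallyLE, ae_restrict_iff' measurableSet_Icc]
      apply Filter.Eventually.of_forall
      rintro x ⟨h0, h1⟩
      simp only [Pi.zero_apply]
      apply inv_nonneg.mpr
      simp only [hbdef] at h0; linarith
    rw [← ofReal_integral_eq_lintegral_ofReal hint hnn]
    congr 1
    rw [integral_Icc_eq_integral_Ioc, ← intervalIntegral.integral_of_le hb1]
    exact int2 t ht ht1
  rw [hsplit, lintegral_union (measurableSet_Ioo.union measurableSet_Icc) ?hd1,
    lintegral_union measurableSet_Icc ?hd2, P1, P2, P3, zero_add]
  case hd1 =>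
    rw [Set.disjoint_left]
    rintro x ⟨hx0, hx1⟩ (⟨h,_⟩|⟨h,_⟩) <;> linarith
  case hd2 =>
    rw [Set.disjoint_left]
    rintro x ⟨hx0, hx1⟩ ⟨h,_⟩
    linarith
  rw [← ENNReal.ofReal_add ?n1 ?n1]
  · congr 1; ring
  case n1 =>
    have := Real.log_nonpos ht.le ht1.le
    linarith

/-- if `U, V` are independent `Uniform(0,1)` and
`Z = (1-U)V + U(1-V)`, then `Z` has density `z ↦ -log|1 - 2z|` on `[0,1]`:
for every measurable `A ⊆ [0,1]`, `P(Z ∈ A) = ∫_A (-log|1-2z|) dz`. -/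
theorem density_of_Z (A : Set ℝ) (hA : MeasurableSet A) (hA1 : A ⊆ Set.Icc (0 : ℝ) 1) :
    Measure.map (fun p : ℝ × ℝ => (1 - p.1) * p.2 + p.1 * (1 - p.2))
        ((volume.restrict (Set.Icc (0 : ℝ) 1)).prod (volume.restrict (Set.Icc (0 : ℝ) 1))) A =
      ENNReal.ofReal (∫ z in A, -Real.log |1 - 2 * z|) := by
  have hf : Measurable (fun p : ℝ × ℝ => (1 - p.1) * p.2 + p.1 * (1 - p.2)) := by fun_prop
  have key : Measure.map (fun p : ℝ × ℝ => (1 - p.1) * p.2 + p.1 * (1 - p.2))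
        ((volume.restrict (Set.Icc (0 : ℝ) 1)).prod (volume.restrict (Set.Icc (0 : ℝ) 1))) A
      = ∫⁻ z in A, ENNReal.ofReal (-Real.log |1 - 2 * z|) := by
    rw [Measure.map_apply hf hA, Measure.prod_apply (hf hA)]
    have step1 : ∫⁻ u, (volume.restrict (Set.Icc (0:ℝ) 1))
          (Prod.mk u ⁻¹' ((fun p : ℝ × ℝ => (1 - p.1) * p.2 + p.1 * (1 - p.2)) ⁻¹' A))
          ∂(volume.restrict (Set.Icc (0:ℝ) 1))
        = ∫⁻ u in Set.Icc (0:ℝ) 1, ∫⁻ z in A,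
            (if |1-2*z| ≤ |1-2*u| then (ENNReal.ofReal |1-2*u|)⁻¹ else 0) := by
      apply lintegral_congr_ae
      have hae : ∀ᵐ u ∂(volume.restrict (Set.Icc (0:ℝ) 1)), u ≠ 1/2 := by
        apply ae_restrict_of_ae
        rw [ae_iff]
        have : {u : ℝ | ¬ u ≠ 1/2} = {1/2} := by ext x; simp
        rw [this]; exact Real.volume_singleton
      filter_upwards [hae] with u hu
      have hu' : (1:ℝ) - 2*u ≠ 0 := fun h => hu (by linarith)
      have hpr : (Prod.mk u ⁻¹' ((fun p : ℝ × ℝ => (1 - p.1) * p.2 + p.1 * (1 - p.2)) ⁻¹' A))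
          = (fun v => (1-u)*v + u*(1-v)) ⁻¹' A := rfl
      have hmeas_pre : MeasurableSet ((fun v => (1-u)*v + u*(1-v)) ⁻¹' A) :=
        (by fun_prop : Measurable fun v : ℝ => (1-u)*v + u*(1-v)) hA
      rw [hpr, Measure.restrict_apply hmeas_pre, slice_eq A hA u hu']
    rw [step1, lintegral_lintegral_swap ?hswap]
    case hswap =>
      apply Measurable.aemeasurable
      apply Measurable.ite
      · exact measurableSet_le (by fun_prop) (by fun_prop)
      · exact (ENNReal.measurable_ofReal.comp (by fun_prop)).inv
      · exact measurable_const
    apply lintegral_congr_ae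
    have haeN : ∀ᵐ z ∂(volume.restrict A), z ∉ ({0, 1, 1/2} : Set ℝ) := by
      apply ae_restrict_of_ae
      rw [ae_iff]
      have : {z : ℝ | ¬ z ∉ ({0, 1, 1/2} : Set ℝ)} = {0, 1, 1/2} := by
        ext x; simp only [Set.mem_setOf_eq, not_not]
      rw [this]
      exact (Set.toFinite _).measure_zero volume
    filter_upwards [haeN, ae_restrict_mem hA] with z hzN hzA
    have hz01 := hA1 hzA
    simp only [Set.mem_insert_iff, Set.mem_singleton_iff, not_or] at hzN
    exact inner_lintegral z (lt_of_le_of_ne hz01.1 (Ne.symm hzN.1))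
      (lt_of_le_of_ne hz01.2 hzN.2.1) hzN.2.2
  rw [key]
  have hnn : (0 : ℝ → ℝ) ≤ᵐ[volume.restrict A] fun z => -Real.log |1 - 2 * z| := by
    filter_upwards [ae_restrict_mem hA] with z hz
    have h01 := hA1 hz
    simp only [Pi.zero_apply, neg_nonneg]
    apply Real.log_nonpos (abs_nonneg _)
    rw [abs_le]; constructor <;> [linarith [h01.2]; linarith [h01.1]]
  have hmeas : AEStronglyMeasurable (fun z => -Real.log |1 - 2 * z|) (volume.restrict A) := by
    apply Measurable.aestronglyMeasurable
    exact (Real.measurable_log.comp (by fun_prop)).neg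
  rw [integral_eq_lintegral_of_nonneg_ae hnn hmeas, ENNReal.ofReal_toReal]
  intro htop
  have hle : (∫⁻ z in A, ENNReal.ofReal (-Real.log |1 - 2 * z|)) ≤ 1 := by
    rw [← key]
    have h1 : Measure.map (fun p : ℝ × ℝ => (1 - p.1) * p.2 + p.1 * (1 - p.2))
        ((volume.restrict (Set.Icc (0 : ℝ) 1)).prod (volume.restrict (Set.Icc (0 : ℝ) 1))) A
        ≤ Measure.map (fun p : ℝ × ℝ => (1 - p.1) * p.2 + p.1 * (1 - p.2))
        ((volume.restrict (Set.Icc (0 : ℝ) 1)).prod (volume.restrict (Set.Icc (0 : ℝ) 1))) Set.univ :=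
      measure_mono (Set.subset_univ _)
    have h2 : Measure.map (fun p : ℝ × ℝ => (1 - p.1) * p.2 + p.1 * (1 - p.2))
        ((volume.restrict (Set.Icc (0 : ℝ) 1)).prod (volume.restrict (Set.Icc (0 : ℝ) 1))) Set.univ = 1 := by
      rw [Measure.map_apply hf MeasurableSet.univ, Set.preimage_univ,
        ← Set.univ_prod_univ, Measure.prod_prod]
      simp [Real.volume_Icc]
    exact h1.trans h2.le
  rw [htop] at hle
  simp at hle
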